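/- Let E be a real Hilbert space and let f : E → ℝ be differentiable at every point, with gradient ∇f satisfying ‖∇f x − ∇f y‖ ≤ L ‖x − y‖ for all x, y ∈ E (L ≥ 0). Then for every x ∈ E, v ∈ E, and step size η̃ ≥ 0, setting x' = x − η̃ • v one has f(x') ≤ f(x) + (η̃/2) ‖∇f(x) − v‖² − (η̃/2)(1 − η̃ L) ‖v‖². (Equation (5) of the paper, the per-step descent inequality for an approximate-gradient step, in Euclidean space.) -/

import Mathlib

open scoped RealInnerProductSpace

lemma descent_aux {E : Type*} [NormedAddCommGroup E] [InnerProductSpace ℝ E]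
    [CompleteSpace E]
    (f : E → ℝ) (hf : ∀ x : E, DifferentiableAt ℝ f x)
    (L : ℝ) (hL : 0 ≤ L)
    (hlip : ∀ x y : E, ‖gradient f x - gradient f y‖ ≤ L * ‖x - y‖)
    (x y : E) :
    f y ≤ f x + ⟪gradient f x, y - x⟫ + L / 2 * ‖y - x‖ ^ 2 := by
  set d := y - x with hd
  set g : ℝ → ℝ := fun t => f (x + t • d) with hg
  have hgrad_cont : Continuous (gradient f) := by
    have : LipschitzWith (Real.toNNReal L) (gradient f) := by
      refine LipschitzWith.of_dist_le_mul fun a b => ?_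
      simpa [dist_eq_norm, Real.coe_toNNReal L hL] using hlip a b
    exact this.continuous
  have hderiv : ∀ t : ℝ, HasDerivAt g (⟪gradient f (x + t • d), d⟫) t := by
    intro t
    have h1 : HasDerivAt (fun t : ℝ => x + t • d) d t := by
      simpa using ((hasDerivAt_id t).smul_const d).const_add x
    have h2 := (hf (x + t • d)).hasGradientAt
    have := h2.hasFDerivAt.comp_hasDerivAt t h1
    exact this
  have hcont : Continuous fun t : ℝ => ⟪gradient f (x + t • d), d⟫ := by
    exact (hgrad_cont.comp (by continuity)).inner continuous_const
  have hFTC : ∫ t in (0:ℝ)..1, ⟪gradient f (x + t • d), d⟫ = g 1 - g 0 :=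
    intervalIntegral.integral_eq_sub_of_hasDerivAt (fun t _ => hderiv t)
      (hcont.intervalIntegrable 0 1)
  have hbound : ∀ t ∈ Set.Icc (0:ℝ) 1,
      ⟪gradient f (x + t • d), d⟫ ≤ ⟪gradient f x, d⟫ + L * t * ‖d‖ ^ 2 := by
    intro t ht
    have : ⟪gradient f (x + t • d), d⟫ - ⟪gradient f x, d⟫
        = ⟪gradient f (x + t • d) - gradient f x, d⟫ := by
      rw [inner_sub_left]
    have hle : ⟪gradient f (x + t • d) - gradient f x, d⟫ ≤ L * t * ‖d‖ ^ 2 := by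
      calc ⟪gradient f (x + t • d) - gradient f x, d⟫
          ≤ ‖gradient f (x + t • d) - gradient f x‖ * ‖d‖ := real_inner_le_norm _ _
        _ ≤ (L * ‖(x + t • d) - x‖) * ‖d‖ := by
            exact mul_le_mul_of_nonneg_right (hlip _ _) (norm_nonneg _)
        _ = L * t * ‖d‖ ^ 2 := by
            rw [show (x + t • d) - x = t • d by abel, norm_smul,
              Real.norm_eq_abs, abs_of_nonneg ht.1]
            ring
    linarith [this ▸ hle]
  have hint : (∫ t in (0:ℝ)..1, ⟪gradient f (x + t • d), d⟫)
      ≤ ∫ t in (0:ℝ)..1, (⟪gradient f x, d⟫ + L * t * ‖d‖ ^ 2) := by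
    apply intervalIntegral.integral_mono_on (by norm_num)
      (hcont.intervalIntegrable 0 1)
      ((by continuity : Continuous fun t : ℝ => ⟪gradient f x, d⟫ + L * t * ‖d‖ ^ 2).intervalIntegrable 0 1)
      hbound
  have hrhs : (∫ t in (0:ℝ)..1, (⟪gradient f x, d⟫ + L * t * ‖d‖ ^ 2))
      = ⟪gradient f x, d⟫ + L / 2 * ‖d‖ ^ 2 := by
    rw [intervalIntegral.integral_add (intervalIntegrable_const)
      ((by fun_prop : Continuous fun t : ℝ => L * t * ‖d‖ ^ 2).intervalIntegrable 0 1)]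
    simp only [intervalIntegral.integral_const, smul_eq_mul]
    have : (∫ t in (0:ℝ)..1, L * t * ‖d‖ ^ 2)
        = (L * ‖d‖ ^ 2) * ∫ t in (0:ℝ)..1, t := by
      rw [← intervalIntegral.integral_const_mul]
      congr 1; ext t; ring
    rw [this, integral_id]; ring
  have hg1 : g 1 = f y := by simp [hg, hd]
  have hg0 : g 0 = f x := by simp [hg]
  rw [hg1, hg0] at hFTC
  linarith [hFTC ▸ hint, hrhs ▸ hint]

/-- Equation (5) of the paper: the per-step descent inequality for an
approximate-gradient step in Euclidean (Hilbert) space: with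
`x' = x − η̃ • v` (here `ηt` stands for the normalized step size `η̃`),
`f x' ≤ f x + (η̃/2) ‖∇f x − v‖² − (η̃/2)(1 − η̃ L) ‖v‖²`. -/
theorem stmt_6 {E : Type*} [NormedAddCommGroup E] [InnerProductSpace ℝ E]
    [CompleteSpace E]
    (f : E → ℝ) (hf : ∀ x : E, DifferentiableAt ℝ f x)
    (L : ℝ) (hL : 0 ≤ L)
    (hlip : ∀ x y : E, ‖gradient f x - gradient f y‖ ≤ L * ‖x - y‖)
    (x : E) (v : E) (ηt : ℝ) (hη : 0 ≤ ηt) (x' : E) (hx' : x' = x - ηt • v) :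
    f x' ≤ f x + (ηt / 2) * ‖gradient f x - v‖ ^ 2
        - (ηt / 2) * (1 - ηt * L) * ‖v‖ ^ 2 := by
  have key := descent_aux f hf L hL hlip x x'
  have hdiff : x' - x = -(ηt • v) := by rw [hx']; abel
  have hnorm : ‖x' - x‖ ^ 2 = ηt ^ 2 * ‖v‖ ^ 2 := by
    rw [hdiff, norm_neg, norm_smul, Real.norm_eq_abs, abs_of_nonneg hη, mul_pow]
  have hinner : ⟪gradient f x, x' - x⟫ = -(ηt * ⟪gradient f x, v⟫) := by
    rw [hdiff, inner_neg_right, real_inner_smul_right]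
  have hpolar : ‖gradient f x - v‖ ^ 2
      = ‖gradient f x‖ ^ 2 - 2 * ⟪gradient f x, v⟫ + ‖v‖ ^ 2 := by
    rw [← real_inner_self_eq_norm_sq, inner_sub_sub_self,
      ← real_inner_self_eq_norm_sq, ← real_inner_self_eq_norm_sq,
      real_inner_comm v (gradient f x)]
    ring
  have hgx : 0 ≤ ‖gradient f x‖ ^ 2 := sq_nonneg _
  nlinarith [key, hnorm, hinner, hpolar, sq_nonneg ηt, mul_nonneg hη hgx]
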